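/- arXiv:1806.09153 — 3 statements merged into one kernel-verified Lean document; each statement's English description precedes it below -/
import Mathlib

section
/- Abelian property of sandpiles: for a state φ on a finite domain Ω ⊂ ℤ², any two maximal sequences of legal topplings starting from φ perform the same number of topplings at each vertex and result in the same stable state φ°. -/
/-- The four lattice neighbors of a vertex of `ℤ²`. -/
def neighbors (v : ℤ × ℤ) : Finset (ℤ × ℤ) :=
  {(v.1 + 1, v.2), (v.1 - 1, v.2), (v.1, v.2 + 1), (v.1, v.2 - 1)}

/-- Toppling a state `φ` at a vertex `v` inside the domain `Ω`. -/
def topple (Ω : Finset (ℤ × ℤ)) (φ : ℤ × ℤ → ℕ) (v : ℤ × ℤ) : ℤ × ℤ → ℕ :=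
  fun w => (if w = v then φ w - 4 else φ w) + (if w ∈ neighbors v ∧ w ∈ Ω then 1 else 0)

/-- A list of vertices is a legal toppling sequence from `φ`: each vertex is in
`Ω` and unstable at the moment it is toppled. -/
def Legal (Ω : Finset (ℤ × ℤ)) : (ℤ × ℤ → ℕ) → List (ℤ × ℤ) → Prop
  | _, [] => True
  | φ, v :: l => v ∈ Ω ∧ 4 ≤ φ v ∧ Legal Ω (topple Ω φ v) l

/-- The state obtained by performing a sequence of topplings. -/
def applySeq (Ω : Finset (ℤ × ℤ)) (φ : ℤ × ℤ → ℕ) (l : List (ℤ × ℤ)) : ℤ × ℤ → ℕ :=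
  l.foldl (topple Ω) φ

/-- A state is stable if every vertex of `Ω` carries at most 3 grains. -/
def Stable (Ω : Finset (ℤ × ℤ)) (φ : ℤ × ℤ → ℕ) : Prop := ∀ v ∈ Ω, φ v ≤ 3

lemma topple_ge (Ω : Finset (ℤ × ℤ)) (φ : ℤ × ℤ → ℕ) (v w : ℤ × ℤ) (h : w ≠ v) :
    φ w ≤ topple Ω φ v w := by
  unfold topple
  rw [if_neg h]
  omega

lemma topple_comm (Ω : Finset (ℤ × ℤ)) (φ : ℤ × ℤ → ℕ) (v w : ℤ × ℤ)
    (hv : 4 ≤ φ v) (hw : 4 ≤ φ w) :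
    topple Ω (topple Ω φ v) w = topple Ω (topple Ω φ w) v := by
  by_cases hvw : v = w
  · subst hvw; rfl
  funext u
  unfold topple
  by_cases huv : u = v
  · subst huv
    rw [if_neg hvw, if_pos rfl, if_pos rfl, if_neg hvw]
    omega
  · by_cases huw : u = w
    · subst huw
      rw [if_pos rfl, if_neg huv, if_neg huv, if_pos rfl]
      omega
    · rw [if_neg huw, if_neg huv, if_neg huv, if_neg huw]
      omega

/-- If an unstable vertex exists, every legal sequence reaching a stable
state must topple it. -/
lemma must_topple (Ω : Finset (ℤ × ℤ)) (φ : ℤ × ℤ → ℕ) (l : List (ℤ × ℤ))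
    (hl : Legal Ω φ l) (hs : Stable Ω (applySeq Ω φ l))
    (v : ℤ × ℤ) (hvΩ : v ∈ Ω) (hv : 4 ≤ φ v) : v ∈ l := by
  induction l generalizing φ with
  | nil =>
    simp only [applySeq, List.foldl] at hs
    exact absurd (hs v hvΩ) (by omega)
  | cons w l ih =>
    by_cases hvw : v = w
    · exact hvw ▸ List.mem_cons_self (a := w) (l := l)
    · exact List.mem_cons_of_mem _
        (ih _ hl.2.2 hs (le_trans hv (topple_ge Ω φ w v hvw)))

/-- Exchange lemma: if `v` is legal at `φ` and occurs in a legal sequence `l`,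
then toppling `v` first and then `l.erase v` is legal and gives the same state. -/
lemma exchange (Ω : Finset (ℤ × ℤ)) (φ : ℤ × ℤ → ℕ) (l : List (ℤ × ℤ))
    (hl : Legal Ω φ l) (v : ℤ × ℤ) (hv : 4 ≤ φ v) (hmem : v ∈ l) :
    Legal Ω (topple Ω φ v) (l.erase v) ∧
      applySeq Ω φ l = applySeq Ω (topple Ω φ v) (l.erase v) := by
  induction l generalizing φ with
  | nil => cases hmem
  | cons w l ih =>
    by_cases hvw : w = v
    · subst hvw
      rw [List.erase_cons_head]
      exact ⟨hl.2.2, rfl⟩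
    · have hmem' : v ∈ l := by
        rcases List.mem_cons.1 hmem with h | h
        · exact absurd h.symm hvw
        · exact h
      have hv' : 4 ≤ topple Ω φ w v :=
        le_trans hv (topple_ge Ω φ w v (fun h => hvw h.symm))
      obtain ⟨hleg, happ⟩ := ih (topple Ω φ w) hl.2.2 hv' hmem'
      have hcomm : topple Ω (topple Ω φ w) v = topple Ω (topple Ω φ v) w :=
        topple_comm Ω φ w v hl.2.1 hv
      rw [List.erase_cons_tail (by simpa using hvw)]
      refine ⟨⟨hl.1, le_trans hl.2.1 (topple_ge Ω φ v w hvw), ?_⟩, ?_⟩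
      · rw [← hcomm]; exact hleg
      · show applySeq Ω (topple Ω φ w) l = applySeq Ω (topple Ω (topple Ω φ v) w) (l.erase v)
        rw [← hcomm]; exact happ

/-- Abelian property of the sandpile model: any two maximal (i.e. ending in a
stable state) legal toppling sequences from the same state `φ` topple each
vertex the same number of times and produce the same stable state. -/
theorem abelian_property (Ω : Finset (ℤ × ℤ)) (φ : ℤ × ℤ → ℕ) (l₁ l₂ : List (ℤ × ℤ))
    (h₁ : Legal Ω φ l₁) (h₂ : Legal Ω φ l₂)
    (hs₁ : Stable Ω (applySeq Ω φ l₁)) (hs₂ : Stable Ω (applySeq Ω φ l₂)) :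
    (∀ v : ℤ × ℤ, l₁.count v = l₂.count v) ∧ applySeq Ω φ l₁ = applySeq Ω φ l₂ := by
  induction l₁ generalizing φ l₂ with
  | nil =>
    cases l₂ with
    | nil => exact ⟨fun _ => rfl, rfl⟩
    | cons w l =>
      simp only [applySeq, List.foldl] at hs₁
      exact absurd (hs₁ w h₂.1) (by have := h₂.2.1; omega)
  | cons v l₁ ih =>
    have hvl₂ : v ∈ l₂ := must_topple Ω φ l₂ h₂ hs₂ v h₁.1 h₁.2.1
    obtain ⟨hleg, happ⟩ := exchange Ω φ l₂ h₂ v h₁.2.1 hvl₂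
    have hs₂' : Stable Ω (applySeq Ω (topple Ω φ v) (l₂.erase v)) := happ ▸ hs₂
    obtain ⟨hcount, hstate⟩ := ih (topple Ω φ v) (l₂.erase v) h₁.2.2 hleg hs₁ hs₂'
    refine ⟨fun u => ?_, ?_⟩
    · rw [List.count_cons]
      rw [hcount u]
      rcases eq_or_ne u v with h | h
      · subst h
        have := List.count_erase_self (a := u) (l := l₂)
        simp only [this]
        have : 1 ≤ l₂.count u := List.count_pos_iff.2 hvl₂
        simp
        omega
      · rw [List.count_erase_of_ne h]
        simp [h, Ne.symm h]
    · show applySeq Ω (topple Ω φ v) l₁ = applySeq Ω φ l₂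
      rw [happ]; exact hstate
end

section
/- Least Action Principle: let φ be a state on a finite domain Ω ⊂ ℤ² with toppling function H of its relaxation. If F : Ω → ℤ≥0 is any function (extended by 0 outside Ω) such that φ + ΔF ≤ 3 pointwise, then F(v) ≥ H(v) for all v ∈ Ω. -/
lemma neighbors_symm (v w : ℤ × ℤ) : w ∈ neighbors v ↔ v ∈ neighbors w := by
  simp [neighbors, Prod.ext_iff]
  omega

lemma not_mem_neighbors_self (v : ℤ × ℤ) : v ∉ neighbors v := by
  simp [neighbors, Prod.ext_iff]
  omega

lemma lap_aux (Ω : Finset (ℤ × ℤ)) :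
    ∀ (l : List (ℤ × ℤ)) (φ F : ℤ × ℤ → ℕ), Legal Ω φ l →
    (∀ v, v ∉ Ω → F v = 0) →
    (∀ v ∈ Ω, (φ v : ℤ) + ((∑ w ∈ neighbors v ∩ Ω, (F w : ℤ)) - 4 * (F v : ℤ)) ≤ 3) →
    ∀ v ∈ Ω, l.count v ≤ F v := by
  intro l
  induction l with
  | nil => intro φ F _ _ _ v _; simp
  | cons v l ih =>
    intro φ F hl hF0 hFstab
    obtain ⟨hvΩ, h4, hl'⟩ := hl
    -- F v ≥ 1
    have hS : (0:ℤ) ≤ ∑ w ∈ neighbors v ∩ Ω, (F w : ℤ) :=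
      Finset.sum_nonneg (fun w _ => by positivity)
    have hFv : 1 ≤ F v := by
      have := hFstab v hvΩ
      have h4' : (4:ℤ) ≤ (φ v : ℤ) := by exact_mod_cast h4
      by_contra h
      have : F v = 0 := by omega
      rw [this] at *
      push_cast at *
      linarith
    set F' : ℤ × ℤ → ℕ := fun u => if u = v then F u - 1 else F u with hF'def
    have hF'cast : ∀ u, (F' u : ℤ) = (F u : ℤ) - (if u = v then 1 else 0) := by
      intro u
      simp only [hF'def]
      by_cases h : u = v
      · subst h; simp [Nat.cast_sub hFv]
      · simp [h]
    have hF0' : ∀ u, u ∉ Ω → F' u = 0 := by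
      intro u hu
      have : u ≠ v := fun h => hu (h ▸ hvΩ)
      simp [hF'def, this, hF0 u hu]
    have hFstab' : ∀ w ∈ Ω, ((topple Ω φ v) w : ℤ) +
        ((∑ u ∈ neighbors w ∩ Ω, (F' u : ℤ)) - 4 * (F' w : ℤ)) ≤ 3 := by
      intro w hwΩ
      have hφ' : ((topple Ω φ v) w : ℤ) =
          (if w = v then (φ w : ℤ) - 4 else (φ w : ℤ)) +
          (if w ∈ neighbors v ∧ w ∈ Ω then 1 else 0) := by
        simp only [topple]
        by_cases h : w = v
        · subst h
          push_cast [Nat.cast_sub h4]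
          split <;> simp
        · push_cast [h]
          split <;> simp
      have hsum : (∑ u ∈ neighbors w ∩ Ω, (F' u : ℤ)) =
          (∑ u ∈ neighbors w ∩ Ω, (F u : ℤ)) -
          (if v ∈ neighbors w ∩ Ω then 1 else 0) := by
        simp only [hF'cast]
        rw [Finset.sum_sub_distrib, Finset.sum_ite_eq' (neighbors w ∩ Ω) v (fun _ => (1:ℤ))]
      rw [hφ', hsum, hF'cast]
      have hbase := hFstab w hwΩ
      by_cases hwv : w = v
      · subst hwv
        have hnn := not_mem_neighbors_self w
        simp [hnn, hwΩ]
        linarith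
      · have hsymm : v ∈ neighbors w ↔ w ∈ neighbors v := (neighbors_symm w v)
        by_cases hn : w ∈ neighbors v
        · have : v ∈ neighbors w ∩ Ω := Finset.mem_inter.mpr ⟨hsymm.mpr hn, hvΩ⟩
          simp [hwv, hn, hwΩ, this]
          linarith
        · have : v ∉ neighbors w ∩ Ω := by
            intro h
            exact hn (hsymm.mp (Finset.mem_inter.mp h).1)
          simp [hwv, hn, this]
          linarith
    have hrec := ih (topple Ω φ v) F' hl' hF0' hFstab'
    intro w hwΩ
    rw [List.count_cons]
    by_cases hwv : w = v
    · subst hwv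
      have := hrec w hwΩ
      simp only [hF'def] at this
      simp at this ⊢
      omega
    · have := hrec w hwΩ
      simp only [hF'def, if_neg hwv] at this
      simp [Ne.symm hwv]
      omega

/-- Least Action Principle: if `H` is the toppling function of a relaxation of
`φ` (a maximal legal toppling sequence), and `F : ℤ² → ℕ` vanishes outside `Ω`
and satisfies `φ + ΔF ≤ 3` pointwise on `Ω` (Dirichlet Laplacian), then
`H ≤ F` on `Ω`. -/
theorem least_action_principle (Ω : Finset (ℤ × ℤ)) (φ : ℤ × ℤ → ℕ)
    (l : List (ℤ × ℤ)) (hl : Legal Ω φ l) (hs : Stable Ω (applySeq Ω φ l))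
    (F : ℤ × ℤ → ℕ) (hF0 : ∀ v, v ∉ Ω → F v = 0)
    (hFstab : ∀ v ∈ Ω,
      (φ v : ℤ) + ((∑ w ∈ neighbors v ∩ Ω, (F w : ℤ)) - 4 * (F v : ℤ)) ≤ 3) :
    ∀ v ∈ Ω, l.count v ≤ F v :=
  lap_aux Ω l φ F hl hF0 hFstab
end

section
/- Let F : Ω → ℝ be piecewise linear with integral slopes, concave, nonnegative on a convex domain Ω, zero on ∂Ω, and with Laplacian (in the distributional/discrete sense) satisfying ΔF ≤ 0 with ΔF(p) < 0 at each point p of a finite set P. If H is the minimal such function (pointwise minimum over the family 𝓕_P), then H is itself a member of 𝓕_P, i.e., the family 𝓕_P is closed under pointwise minima of pairs: if F₁, F₂ ∈ 𝓕_P then min(F₁, F₂) ∈ 𝓕_P. -/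
open Filter Topology

noncomputable def aff (t : ℤ × ℤ × ℝ) (x : ℝ × ℝ) : ℝ :=
  t.2.2 + (t.1 : ℝ) * x.1 + (t.2.1 : ℝ) * x.2

lemma aff_differentiable (t : ℤ × ℤ × ℝ) : Differentiable ℝ (aff t) := by
  unfold aff; fun_prop

lemma deriv_le_of_upper {φ : ℝ → ℝ} {c s : ℝ} (hd : HasDerivAt φ c 0)
    (h : ∀ᶠ t in 𝓝 (0:ℝ), φ t ≤ φ 0 + t * s) : c ≤ s := by
  have h1 : Tendsto (slope φ 0) (𝓝[>] 0) (𝓝 c) :=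
    (hasDerivAt_iff_tendsto_slope.1 hd).mono_left
      (nhdsWithin_mono _ (fun x hx => ne_of_gt hx))
  refine le_of_tendsto h1 ?_
  filter_upwards [eventually_nhdsWithin_of_eventually_nhds h, self_mem_nhdsWithin] with t ht ht0
  rw [slope_def_field, sub_zero, div_le_iff₀ ht0]
  linarith

lemma le_deriv_of_upper {φ : ℝ → ℝ} {c s : ℝ} (hd : HasDerivAt φ c 0)
    (h : ∀ᶠ t in 𝓝 (0:ℝ), φ t ≤ φ 0 + t * s) : s ≤ c := by
  have h1 : Tendsto (slope φ 0) (𝓝[<] 0) (𝓝 c) :=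
    (hasDerivAt_iff_tendsto_slope.1 hd).mono_left
      (nhdsWithin_mono _ (fun x hx => ne_of_lt hx))
  refine ge_of_tendsto h1 ?_
  filter_upwards [eventually_nhdsWithin_of_eventually_nhds h, self_mem_nhdsWithin] with t ht ht0
  rw [slope_def_field, sub_zero, le_div_iff_of_neg ht0]
  linarith

lemma not_diff_of_two_slopes {G : ℝ × ℝ → ℝ} {p v : ℝ × ℝ} {s₁ s₂ : ℝ}
    (hs : s₁ < s₂)
    (h₁ : ∀ᶠ t in 𝓝 (0:ℝ), G (p + t • v) ≤ G p + t * s₁)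
    (h₂ : ∀ᶠ t in 𝓝 (0:ℝ), G (p + t • v) ≤ G p + t * s₂) :
    ¬ DifferentiableAt ℝ G p := by
  intro hG
  have hγ : HasDerivAt (fun t : ℝ => p + t • v) v 0 := by
    simpa using ((hasDerivAt_id (0:ℝ)).smul_const v).const_add p
  have hφ : HasDerivAt (fun t : ℝ => G (p + t • v)) (fderiv ℝ G p v) 0 :=
    hG.hasFDerivAt.comp_hasDerivAt_of_eq 0 hγ (by simp)
  have e0 : G (p + (0:ℝ) • v) = G p := by simp
  have hle : fderiv ℝ G p v ≤ s₁ := deriv_le_of_upper hφ (by simpa [e0] using h₁)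
  have hge : s₂ ≤ fderiv ℝ G p v := le_deriv_of_upper hφ (by simpa [e0] using h₂)
  linarith

lemma aff_line (t : ℤ × ℤ × ℝ) (p v : ℝ × ℝ) (s : ℝ) :
    aff t (p + s • v) = aff t p + s * ((t.1 : ℝ) * v.1 + (t.2.1 : ℝ) * v.2) := by
  simp [aff, Prod.fst_add, Prod.snd_add, Prod.smul_fst, Prod.smul_snd, smul_eq_mul]
  ring

lemma not_diff_of_active_pair {G : ℝ × ℝ → ℝ} {p : ℝ × ℝ} {t₁ t₂ : ℤ × ℤ × ℝ}
    (h1 : ∀ᶠ x in 𝓝 p, G x ≤ aff t₁ x) (h2 : ∀ᶠ x in 𝓝 p, G x ≤ aff t₂ x)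
    (e1 : aff t₁ p = G p) (e2 : aff t₂ p = G p)
    (hne : ((t₁.1 : ℝ), (t₁.2.1 : ℝ)) ≠ ((t₂.1 : ℝ), (t₂.2.1 : ℝ))) :
    ¬ DifferentiableAt ℝ G p := by
  obtain ⟨v, hv⟩ : ∃ v : ℝ × ℝ,
      (t₁.1 : ℝ) * v.1 + (t₁.2.1 : ℝ) * v.2 ≠ (t₂.1 : ℝ) * v.1 + (t₂.2.1 : ℝ) * v.2 := by
    by_cases h : (t₁.1 : ℝ) = (t₂.1 : ℝ)
    · refine ⟨(0, 1), ?_⟩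
      have hb : (t₁.2.1 : ℝ) ≠ (t₂.2.1 : ℝ) := fun hb => hne (by rw [h, hb])
      simpa using hb
    · exact ⟨(1, 0), by simpa using h⟩
  set s₁ := (t₁.1 : ℝ) * v.1 + (t₁.2.1 : ℝ) * v.2 with hs₁
  set s₂ := (t₂.1 : ℝ) * v.1 + (t₂.2.1 : ℝ) * v.2 with hs₂
  have htend : Tendsto (fun s : ℝ => p + s • v) (𝓝 0) (𝓝 p) := by
    have hc : Continuous fun s : ℝ => p + s • v := by fun_prop
    simpa using hc.tendsto 0
  have b1 : ∀ᶠ s in 𝓝 (0:ℝ), G (p + s • v) ≤ G p + s * s₁ := by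
    filter_upwards [htend.eventually h1] with s hts
    calc G (p + s • v) ≤ aff t₁ (p + s • v) := hts
    _ = G p + s * s₁ := by rw [aff_line, e1]
  have b2 : ∀ᶠ s in 𝓝 (0:ℝ), G (p + s • v) ≤ G p + s * s₂ := by
    filter_upwards [htend.eventually h2] with s hts
    calc G (p + s • v) ≤ aff t₂ (p + s • v) := hts
    _ = G p + s * s₂ := by rw [aff_line, e2]
  rcases lt_or_gt_of_ne hv with h | h
  · exact not_diff_of_two_slopes h b1 b2
  · exact not_diff_of_two_slopes h b2 b1

lemma exists_active_pair {S : Finset (ℤ × ℤ × ℝ)} (hS : S.Nonempty) {F : ℝ × ℝ → ℝ} {p : ℝ × ℝ}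
    (hF : ∀ᶠ x in 𝓝 p, F x = S.inf' hS fun t => aff t x)
    (hnd : ¬ DifferentiableAt ℝ F p) :
    ∃ t₁ ∈ S, ∃ t₂ ∈ S, aff t₁ p = F p ∧ aff t₂ p = F p ∧
      ((t₁.1 : ℝ), (t₁.2.1 : ℝ)) ≠ ((t₂.1 : ℝ), (t₂.2.1 : ℝ)) := by
  by_contra hcon
  push_neg at hcon
  obtain ⟨t₀, ht₀S, ht₀⟩ := Finset.exists_mem_eq_inf' hS fun t => aff t p
  have hFp : F p = aff t₀ p := by rw [hF.self_of_nhds, ht₀]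
  have key : ∀ t ∈ S, ∀ᶠ x in 𝓝 p, aff t₀ x ≤ aff t x := by
    intro t htS
    have hle : aff t₀ p ≤ aff t p := ht₀ ▸ Finset.inf'_le _ htS
    rcases eq_or_lt_of_le hle with heq | hlt
    · have hsl := hcon t htS t₀ ht₀S (heq ▸ hFp.symm) hFp.symm
      have ha : (t.1 : ℝ) = (t₀.1 : ℝ) := congrArg Prod.fst hsl
      have hb : (t.2.1 : ℝ) = (t₀.2.1 : ℝ) := congrArg Prod.snd hsl
      have : ∀ x, aff t₀ x = aff t x := by
        intro x
        have hp' : aff t₀ p = aff t p := heq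
        simp only [aff] at hp' ⊢
        rw [ha, hb] at hp' ⊢
        linarith
      exact Eventually.of_forall fun x => (this x).le
    · have := ((aff_differentiable t₀).continuous.tendsto p).eventually_lt
        ((aff_differentiable t).continuous.tendsto p) hlt
      exact this.mono fun x hx => hx.le
  have heq : F =ᶠ[𝓝 p] aff t₀ := by
    filter_upwards [hF, (eventually_all_finset S).2 key] with x hx hall
    rw [hx]
    exact le_antisymm (Finset.inf'_le _ ht₀S) (Finset.le_inf' _ _ hall)
  exact hnd (heq.differentiableAt_iff.2 ((aff_differentiable t₀).differentiableAt))



/-- Membership in the family `𝓕_P` of functions on a domain `Ω ⊆ ℝ²`: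
`F` is (1) piecewise linear with integral slopes and (3) concave — for concave
functions these two conditions together are equivalent to being, on `Ω`, a
finite minimum of affine functions with integer slopes — (2) nonnegative on
`Ω` and zero on the boundary of `Ω`, and (4) not smooth at every point of the
finite prescribed set `P` (`ΔF < 0` at each `p ∈ P`, i.e. a genuine corner). -/

def MemF (Ω P : Set (ℝ × ℝ)) (F : ℝ × ℝ → ℝ) : Prop :=
  (∃ (S : Finset (ℤ × ℤ × ℝ)) (hS : S.Nonempty), ∀ p ∈ Ω,
      F p = S.inf' hS fun t => t.2.2 + (t.1 : ℝ) * p.1 + (t.2.1 : ℝ) * p.2) ∧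
  (∀ p ∈ Ω, 0 ≤ F p) ∧
  (∀ p ∈ frontier Ω, F p = 0) ∧
  ConcaveOn ℝ Ω F ∧
  (∀ p ∈ P, ¬ DifferentiableAt ℝ F p)

/-- The family `𝓕_P` is closed under pointwise minima of pairs: if
`F₁, F₂ ∈ 𝓕_P` then `min (F₁, F₂) ∈ 𝓕_P`.  (Nonsmoothness at `p ∈ P` is
preserved: near `p` the minimum agrees with one of the two functions or
acquires a new corner.)  Hence the pointwise minimum defining `F_P = min 𝓕_P`
stays in the family. -/
theorem memF_min (Ω : Set (ℝ × ℝ)) (hΩ : Convex ℝ Ω) (P : Set (ℝ × ℝ))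
    (hPfin : P.Finite) (hP : P ⊆ interior Ω)
    (F₁ F₂ : ℝ × ℝ → ℝ) (h₁ : MemF Ω P F₁) (h₂ : MemF Ω P F₂) :
    MemF Ω P (fun p => min (F₁ p) (F₂ p)) := by
  classical
  obtain ⟨⟨S₁, hS₁, hrep₁⟩, hnn₁, hbd₁, hcc₁, hns₁⟩ := h₁
  obtain ⟨⟨S₂, hS₂, hrep₂⟩, hnn₂, hbd₂, hcc₂, hns₂⟩ := h₂
  have hSu : (S₁ ∪ S₂).Nonempty := hS₁.mono Finset.subset_union_left
  have hrep : ∀ p ∈ Ω, min (F₁ p) (F₂ p) = (S₁ ∪ S₂).inf' hSu fun t => aff t p := by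
    intro p hp
    rw [hrep₁ p hp, hrep₂ p hp, ← Finset.inf'_union hS₁ hS₂]
    rfl
  refine ⟨⟨S₁ ∪ S₂, hSu, fun p hp => hrep p hp⟩, fun p hp => le_min (hnn₁ p hp) (hnn₂ p hp),
    fun p hp => by show min (F₁ p) (F₂ p) = 0; rw [hbd₁ p hp, hbd₂ p hp, min_self], ⟨hΩ, ?_⟩, ?_⟩
  · -- concavity
    intro x hx y hy a b ha hb hab
    have hz : a • x + b • y ∈ Ω := hΩ hx hy ha hb hab
    show a • min (F₁ x) (F₂ x) + b • min (F₁ y) (F₂ y) ≤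
      min (F₁ (a • x + b • y)) (F₂ (a • x + b • y))
    simp only [smul_eq_mul]
    rw [hrep x hx, hrep y hy, hrep _ hz]
    refine Finset.le_inf' _ _ fun t ht => ?_
    have hid : aff t (a • x + b • y) = a * aff t x + b * aff t y := by
      simp only [aff, Prod.fst_add, Prod.snd_add, Prod.smul_fst, Prod.smul_snd, smul_eq_mul]
      linear_combination t.2.2 * hab.symm
    rw [hid]
    gcongr
    · exact Finset.inf'_le _ ht
    · exact Finset.inf'_le _ ht
  · -- nondifferentiability at each p ∈ P
    intro p hp
    have hpi : interior Ω ∈ 𝓝 p := isOpen_interior.mem_nhds (hP hp)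
    have hF₁ : ∀ᶠ x in 𝓝 p, F₁ x = S₁.inf' hS₁ fun t => aff t x := by
      filter_upwards [hpi] with x hx; exact hrep₁ x (interior_subset hx)
    have hF₂ : ∀ᶠ x in 𝓝 p, F₂ x = S₂.inf' hS₂ fun t => aff t x := by
      filter_upwards [hpi] with x hx; exact hrep₂ x (interior_subset hx)
    have hE₁ : F₁ =ᶠ[𝓝 p] (fun x => S₁.inf' hS₁ fun t => aff t x) := hF₁
    have hE₂ : F₂ =ᶠ[𝓝 p] (fun x => S₂.inf' hS₂ fun t => aff t x) := hF₂
    have hc₁ : ContinuousAt F₁ p :=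
      (ContinuousAt.finset_inf'_apply hS₁ fun i _ =>
        (aff_differentiable i).continuous.continuousAt).congr hE₁.symm
    have hc₂ : ContinuousAt F₂ p :=
      (ContinuousAt.finset_inf'_apply hS₂ fun i _ =>
        (aff_differentiable i).continuous.continuousAt).congr hE₂.symm
    rcases lt_trichotomy (F₁ p) (F₂ p) with hlt | heq | hgt
    · have hev : ∀ᶠ x in 𝓝 p, F₁ x < F₂ x := hc₁.eventually_lt hc₂ hlt
      have hGeq : (fun q => min (F₁ q) (F₂ q)) =ᶠ[𝓝 p] F₁ :=
        hev.mono fun x hx => min_eq_left hx.le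
      exact fun hd => hns₁ p hp (hGeq.differentiableAt_iff.1 hd)
    · obtain ⟨t₁, ht₁S, t₂, ht₂S, e1, e2, hne⟩ := exists_active_pair hS₁ hF₁ (hns₁ p hp)
      refine not_diff_of_active_pair ?_ ?_ ?_ ?_ hne
      · filter_upwards [hF₁] with x hx
        exact le_trans (min_le_left _ _) (hx ▸ Finset.inf'_le _ ht₁S)
      · filter_upwards [hF₁] with x hx
        exact le_trans (min_le_left _ _) (hx ▸ Finset.inf'_le _ ht₂S)
      · simpa [min_eq_left heq.le] using e1
      · simpa [min_eq_left heq.le] using e2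
    · have hev : ∀ᶠ x in 𝓝 p, F₂ x < F₁ x := hc₂.eventually_lt hc₁ hgt
      have hGeq : (fun q => min (F₁ q) (F₂ q)) =ᶠ[𝓝 p] F₂ :=
        hev.mono fun x hx => min_eq_right hx.le
      exact fun hd => hns₂ p hp (hGeq.differentiableAt_iff.1 hd)
end
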